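/- Suppose n ≥ 4f and f ≥ 1. Model parties as Fin n with party 0 the broadcaster, a set Byz of Byzantine parties with |Byz| ≤ f, and for each value v ∈ {0,1} a set Ack(v) ⊆ Fin n \ {0} of non-broadcaster parties that sent ack for v, where every honest (non-Byzantine) party belongs to Ack(v) for at most one v. If 0 ∈ Byz, |Ack(0)| ≥ n − f − 1 and |Ack(1)| ≥ n − f − 1, then a contradiction follows. -/
import Mathlib


/-- Set-theoretic 2-round-commit agreement lemma for BRB under `n ≥ 4f` with a
Byzantine broadcaster (party 0): two ack quorums of size `n - f - 1` of
non-broadcaster parties, whose intersection consists only of Byzantine parties,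
cannot both exist. -/
theorem stmt_10 (n f : ℕ) (hn : 4 * f ≤ n) (hf : 1 ≤ f)
    (b : Fin n) (hb : b.val = 0)
    (Byz : Finset (Fin n)) (hByz : Byz.card ≤ f) (hbByz : b ∈ Byz)
    (Ack : Fin 2 → Finset (Fin n))
    (hA0 : Ack 0 ⊆ Finset.univ \ {b}) (hA1 : Ack 1 ⊆ Finset.univ \ {b})
    (honest_one : Ack 0 ∩ Ack 1 ⊆ Byz)
    (hc0 : n - f - 1 ≤ (Ack 0).card) (hc1 : n - f - 1 ≤ (Ack 1).card) :
    False := by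
  have hub : (Ack 0 ∪ Ack 1).card ≤ n - 1 := by
    have hsub : Ack 0 ∪ Ack 1 ⊆ Finset.univ \ {b} := Finset.union_subset hA0 hA1
    calc (Ack 0 ∪ Ack 1).card ≤ (Finset.univ \ {b}).card := Finset.card_le_card hsub
      _ = n - 1 := by
        rw [Finset.card_sdiff_of_subset (by simp)]
        simp
  have hint : Ack 0 ∩ Ack 1 ⊆ Byz \ {b} := by
    intro x hx
    rw [Finset.mem_sdiff]
    refine ⟨honest_one hx, ?_⟩
    have := hA0 (Finset.mem_of_mem_inter_left hx)
    simp at this ⊢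
    exact this
  have hib : (Ack 0 ∩ Ack 1).card ≤ f - 1 := by
    calc (Ack 0 ∩ Ack 1).card ≤ (Byz \ {b}).card := Finset.card_le_card hint
      _ = Byz.card - 1 := by rw [Finset.card_sdiff_of_subset (by simp [hbByz])]; simp
      _ ≤ f - 1 := by omega
  have hie := Finset.card_union_add_card_inter (Ack 0) (Ack 1)
  omega
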